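/- Let ξ = 0 (exponential limit) and let G be the EGP3(κ,σ,0) distribution function G(x) = (1 - e^{-x/σ})^κ for x > 0, with reciprocal hazard h(x) = (1-G(x))/G'(x). Then lim_{x→∞} h'(x) = 0; that is, EGP3 with ξ = 0 satisfies the von Mises condition with tail index 0. -/

import Mathlib

open Filter Topology

/-- The EGP3(κ,σ,0) distribution `G(x) = (1 - e^{-x/σ})^κ` satisfies the von Mises condition
with tail index 0: the derivative of its reciprocal hazard function `h = (1-G)/g` tends to 0
at infinity. -/
theorem egp3_xi_zero_von_mises (κ σ : ℝ) (hκ : 0 < κ) (hσ : 0 < σ)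
    (G g h : ℝ → ℝ)
    (hG : ∀ x : ℝ, G x = (1 - Real.exp (-x / σ)) ^ κ)
    (hg : ∀ x : ℝ, g x =
      κ / σ * (1 - Real.exp (-x / σ)) ^ (κ - 1) * Real.exp (-x / σ))
    (hh : ∀ x : ℝ, h x = (1 - G x) / g x) :
    Tendsto (fun x : ℝ => deriv h x) atTop (𝓝 0) := by
  have hσ' : σ ≠ 0 := ne_of_gt hσ
  have hκ' : κ ≠ 0 := ne_of_gt hκ
  -- derivative of u y = exp (-y/σ)
  have hu : ∀ x : ℝ, HasDerivAt (fun y : ℝ => Real.exp (-y / σ))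
      (-(Real.exp (-x / σ)) / σ) x := by
    intro x
    have h1 : HasDerivAt (fun y : ℝ => -y / σ) (-1 / σ) x := by
      simpa using ((hasDerivAt_id x).neg.div_const σ)
    have := h1.exp
    convert this using 1
    ring
  -- basic facts for x > 0
  have basic : ∀ x : ℝ, 0 < x → 0 < Real.exp (-x / σ) ∧ Real.exp (-x / σ) < 1 := by
    intro x hx
    refine ⟨Real.exp_pos _, ?_⟩
    have : -x / σ < 0 := div_neg_of_neg_of_pos (neg_neg_iff_pos.mpr hx) hσ
    calc Real.exp (-x / σ) < Real.exp 0 := Real.exp_lt_exp.mpr this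
      _ = 1 := Real.exp_zero
  -- the key derivative computation
  have key : ∀ x : ℝ, 0 < x →
      HasDerivAt h (-1 - h x *
        ((κ - 1) * Real.exp (-x / σ) / (σ * (1 - Real.exp (-x / σ))) - 1 / σ)) x := by
    intro x hx
    obtain ⟨hux, hux1⟩ := basic x hx
    have htx : 0 < 1 - Real.exp (-x / σ) := by linarith
    have htne : (1 : ℝ) - Real.exp (-x / σ) ≠ 0 := ne_of_gt htx
    have hgpos : 0 < g x := by
      rw [hg x]
      have := Real.rpow_pos_of_pos htx (κ - 1)
      positivity
    have hgne : g x ≠ 0 := ne_of_gt hgpos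
    -- derivative of t y = 1 - exp (-y/σ)
    have ht' : HasDerivAt (fun y : ℝ => 1 - Real.exp (-y / σ))
        (Real.exp (-x / σ) / σ) x := by
      have h0 := (hasDerivAt_const x (1 : ℝ)).sub (hu x)
      convert h0 using 1
      · rfl
      · rfl
      · rfl
      ring
    -- derivative of G
    have hG' : HasDerivAt G (g x) x := by
      have h0 := ht'.rpow_const (p := κ) (Or.inl htne)
      convert h0 using 1
      · funext y; exact hG y
      · rw [hg x]; ring
    have h1G : HasDerivAt (fun y => 1 - G y) (-(g x)) x := by
      exact ((hasDerivAt_const x (1 : ℝ)).sub hG').congr_deriv (by simp)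
    have hsplit : (1 - Real.exp (-x / σ)) ^ (κ - 1)
        = (1 - Real.exp (-x / σ)) ^ (κ - 1 - 1) * (1 - Real.exp (-x / σ)) := by
      rw [← Real.rpow_add_one htne]; ring_nf
    -- derivative of g
    have hg' : HasDerivAt g
        (g x * ((κ - 1) * Real.exp (-x / σ) / (σ * (1 - Real.exp (-x / σ))) - 1 / σ)) x := by
      have hpow := ht'.rpow_const (p := κ - 1) (Or.inl htne)
      have hprod := (hpow.const_mul (κ / σ)).mul (hu x)
      convert hprod using 1
      · rfl
      · rfl
      · funext y; exact hg y
      · rw [hg x, hsplit]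
        generalize (1 - Real.exp (-x / σ)) ^ (κ - 1 - 1) = P
        generalize Real.exp (-x / σ) = E at htne ⊢
        field_simp
        ring
    -- quotient
    have hdiv := h1G.div hg' hgne
    convert hdiv using 1
    · rfl
    · rfl
    · funext y; exact hh y
    · rw [hh x]
      field_simp
  -- now the limits
  have tendsto_u : Tendsto (fun x : ℝ => Real.exp (-x / σ)) atTop (𝓝 0) := by
    apply Real.tendsto_exp_atBot.comp
    have h1 : Tendsto (fun x : ℝ => x / σ) atTop atTop :=
      tendsto_id.atTop_div_const hσ
    have h2 : Tendsto (fun x : ℝ => -(x / σ)) atTop atBot :=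
      tendsto_neg_atTop_atBot.comp h1
    simpa [neg_div] using h2
  have u_ne : ∀ x : ℝ, Real.exp (-x / σ) ≠ 0 := fun x => (Real.exp_pos _).ne'
  -- t → 1
  have tendsto_t : Tendsto (fun x : ℝ => 1 - Real.exp (-x / σ)) atTop (𝓝 1) := by
    simpa using (tendsto_const_nhds.sub tendsto_u :
      Tendsto (fun x : ℝ => 1 - Real.exp (-x / σ)) atTop (𝓝 (1 - 0)))
  -- t^(κ-1) → 1
  have tendsto_tpow : Tendsto (fun x : ℝ => (1 - Real.exp (-x / σ)) ^ (κ - 1))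
      atTop (𝓝 1) := by
    have hc : ContinuousAt (fun z : ℝ => z ^ (κ - 1)) 1 :=
      Real.continuousAt_rpow_const 1 (κ - 1) (Or.inl one_ne_zero)
    have := hc.tendsto.comp tendsto_t
    simpa [Real.one_rpow, Function.comp_def] using this
  -- A(u) = (1 - (1-u)^κ)/u → κ  via slope at 0
  have hφ : HasDerivAt (fun v : ℝ => 1 - (1 - v) ^ κ) κ 0 := by
    have h1 : HasDerivAt (fun v : ℝ => 1 - v) (-1) 0 := by
      exact ((hasDerivAt_const (0:ℝ) (1:ℝ)).sub (hasDerivAt_id 0)).congr_deriv (by simp)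
    have h2 := h1.rpow_const (p := κ) (Or.inl (by norm_num))
    have h3 := (hasDerivAt_const (0:ℝ) (1:ℝ)).sub h2
    convert h3 using 1
    · rfl
    · rfl
    · rfl
    simp [Real.one_rpow]
  have hslope : Tendsto (fun v : ℝ => (1 - (1 - v) ^ κ) / v) (𝓝[≠] (0:ℝ)) (𝓝 κ) := by
    have := hasDerivAt_iff_tendsto_slope.mp hφ
    apply this.congr
    intro v
    simp [slope_def_field, Real.one_rpow]
  have tendsto_u_ne : Tendsto (fun x : ℝ => Real.exp (-x / σ)) atTop (𝓝[≠] (0:ℝ)) := by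
    rw [tendsto_nhdsWithin_iff]
    exact ⟨tendsto_u, Eventually.of_forall fun x => u_ne x⟩
  have tendsto_A : Tendsto (fun x : ℝ =>
      (1 - (1 - Real.exp (-x / σ)) ^ κ) / Real.exp (-x / σ)) atTop (𝓝 κ) :=
    hslope.comp tendsto_u_ne
  -- h → σ
  have tendsto_h : Tendsto h atTop (𝓝 σ) := by
    have heq : ∀ᶠ x : ℝ in atTop, σ / κ *
        ((1 - (1 - Real.exp (-x / σ)) ^ κ) / Real.exp (-x / σ)) /
        ((1 - Real.exp (-x / σ)) ^ (κ - 1)) = h x := by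
      filter_upwards [eventually_gt_atTop (0:ℝ)] with x hx
      obtain ⟨hux, hux1⟩ := basic x hx
      have htx : (0:ℝ) < 1 - Real.exp (-x / σ) := by linarith
      have hpow : (0:ℝ) < (1 - Real.exp (-x / σ)) ^ (κ - 1) :=
        Real.rpow_pos_of_pos htx _
      rw [hh x, hG x, hg x]
      field_simp
    have hlim : Tendsto (fun x : ℝ => σ / κ *
        ((1 - (1 - Real.exp (-x / σ)) ^ κ) / Real.exp (-x / σ)) /
        ((1 - Real.exp (-x / σ)) ^ (κ - 1))) atTop (𝓝 (σ / κ * κ / 1)) :=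
      (tendsto_A.const_mul (σ / κ)).div tendsto_tpow one_ne_zero
    have heq2 : σ / κ * κ / 1 = σ := by field_simp
    rw [heq2] at hlim
    exact hlim.congr' heq
  -- q → -1/σ
  have tendsto_q : Tendsto (fun x : ℝ =>
      (κ - 1) * Real.exp (-x / σ) / (σ * (1 - Real.exp (-x / σ))) - 1 / σ)
      atTop (𝓝 (-(1 / σ))) := by
    have hnum : Tendsto (fun x : ℝ => (κ - 1) * Real.exp (-x / σ)) atTop (𝓝 0) := by
      simpa using tendsto_u.const_mul (κ - 1)
    have hden : Tendsto (fun x : ℝ => σ * (1 - Real.exp (-x / σ))) atTop (𝓝 σ) := by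
      simpa using tendsto_t.const_mul σ
    have := (hnum.div hden hσ').sub (tendsto_const_nhds (x := 1 / σ))
    simpa using this
  -- combine
  have final : Tendsto (fun x : ℝ => -1 - h x *
      ((κ - 1) * Real.exp (-x / σ) / (σ * (1 - Real.exp (-x / σ))) - 1 / σ))
      atTop (𝓝 0) := by
    have hmain := (tendsto_const_nhds (x := (-1:ℝ))).sub (tendsto_h.mul tendsto_q)
    have heq : -1 - σ * -(1 / σ) = 0 := by field_simp; ring
    rw [heq] at hmain
    exact hmain
  apply final.congr'
  filter_upwards [eventually_gt_atTop (0:ℝ)] with x hx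
  exact ((key x hx).deriv).symm
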